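/- arXiv:0901.4481 — 4 statements merged into one kernel-verified Lean document; each statement's English description precedes it below -/
import Mathlib

section
/- There is no Lie algebra monomorphism from sl(2,ℂ) into gl(3,ℂ) ⋉ ℂ³ (the Lie algebra of the complex affine group of ℂ³) whose image intersects the isotropy subalgebra gl(3,ℂ) trivially. -/
open Matrix

/-- The affine Lie algebra bracket on `gl(n,ℂ) ⋉ ℂⁿ`:
`[(A,v),(B,w)] = (AB − BA, Aw − Bv)`. -/
noncomputable def affBracket {n : ℕ} (p q : Matrix (Fin n) (Fin n) ℂ × (Fin n → ℂ)) :
    Matrix (Fin n) (Fin n) ℂ × (Fin n → ℂ) :=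
  (p.1 * q.1 - q.1 * p.1, p.1 *ᵥ q.2 - q.1 *ᵥ p.2)

set_option maxHeartbeats 1000000

namespace NoFlatSL2

abbrev M3 := Matrix (Fin 3) (Fin 3) ℂ
abbrev V3 := Fin 3 → ℂ

/-- A matrix satisfying `[C,X] = wX` with `w ≠ 0` is nilpotent. -/
lemma nilp_of_weight {C X : M3} {w : ℂ} (hw : w ≠ 0) (h : C*X - X*C = w•X) :
    IsNilpotent X := by
  by_contra hX
  have hpow : ∀ k : ℕ, C*X^(k+1) - X^(k+1)*C = (((k:ℂ)+1)*w)•X^(k+1) := by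
    intro k
    induction k with
    | zero => simpa using h
    | succ k ih =>
      have e : C*X^(k+2) - X^(k+2)*C = (C*X^(k+1) - X^(k+1)*C)*X + X^(k+1)*(C*X - X*C) := by
        noncomm_ring
      rw [e, ih, h, smul_mul_assoc, mul_smul_comm, ← pow_succ, ← add_smul]
      push_cast
      ring_nf
  set T : Module.End ℂ M3 := LinearMap.mulLeft ℂ C - LinearMap.mulRight ℂ C with hT
  have hev : ∀ k : ℕ, T.HasEigenvector (((k:ℂ)+1)*w) (X^(k+1)) := by
    intro k
    constructor
    · rw [Module.End.mem_eigenspace_iff]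
      simpa [hT, LinearMap.sub_apply, LinearMap.mulLeft_apply, LinearMap.mulRight_apply] using
        hpow k
    · intro h0
      exact hX ⟨k+1, h0⟩
  have hinj : Function.Injective (fun k : ℕ => ((k:ℂ)+1)*w) := by
    intro m n hmn
    simp only [mul_eq_mul_right_iff] at hmn
    rcases hmn with h' | h'
    · exact_mod_cast add_right_cancel h'
    · exact absurd h' hw
  have hli := T.eigenvectors_linearIndependent' _ hinj _ hev
  have : Finite ℕ := hli.finite
  exact absurd this (by simp [not_finite_iff_infinite]; infer_instance)

/-- The Casimir element commutes with the image of the representation. -/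
lemma omega_comm {A B C : M3} (h1 : C*A - A*C = (2:ℂ)•A) (h2 : C*B - B*C = (-2:ℂ)•B)
    (h3 : A*B - B*A = C) :
    ((A*B + B*A + (1/2:ℂ)•(C*C))*A = A*(A*B + B*A + (1/2:ℂ)•(C*C))
    ∧ (A*B + B*A + (1/2:ℂ)•(C*C))*B = B*(A*B + B*A + (1/2:ℂ)•(C*C)))
    ∧ (A*B + B*A + (1/2:ℂ)•(C*C))*C = C*(A*B + B*A + (1/2:ℂ)•(C*C)) := by
  have hBA : B*A = A*B - C := by rw [← h3]; noncomm_ring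
  have hCA : C*A = A*C + (2:ℂ)•A := by rw [← h1]; noncomm_ring
  have hCB : C*B = B*C - (2:ℂ)•B := by
    have := h2; rw [sub_eq_iff_eq_add] at this; rw [this, neg_smul]; noncomm_ring
  have hBA' : ∀ X : M3, B*(A*X) = A*(B*X) - C*X := by
    intro X; rw [← mul_assoc, hBA, sub_mul, mul_assoc]
  have hCA' : ∀ X : M3, C*(A*X) = A*(C*X) + (2:ℂ)•(A*X) := by
    intro X; rw [← mul_assoc, hCA, add_mul, mul_assoc, smul_mul_assoc]
  have hCB' : ∀ X : M3, C*(B*X) = B*(C*X) - (2:ℂ)•(B*X) := by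
    intro X; rw [← mul_assoc, hCB, sub_mul, mul_assoc, smul_mul_assoc]
  refine ⟨⟨?_, ?_⟩, ?_⟩ <;>
  · simp only [mul_add, add_mul, mul_sub, sub_mul, smul_mul_assoc, mul_smul_comm, mul_assoc,
      hBA, hBA', hCA, hCA', hCB, hCB', smul_add, smul_sub, smul_smul]
    module

/-- The Casimir element applied to the cocycle. -/
lemma omega_cocycle {A B C : M3} {a b c : V3}
    (h1 : C*A - A*C = (2:ℂ)•A) (h2 : C*B - B*C = (-2:ℂ)•B) (h3 : A*B - B*A = C)
    (h4 : C *ᵥ a - A *ᵥ c = (2:ℂ)•a) (h5 : C *ᵥ b - B *ᵥ c = (-2:ℂ)•b)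
    (h6 : A *ᵥ b - B *ᵥ a = c) :
    (((A*B + B*A + (1/2:ℂ)•(C*C)) *ᵥ a = A *ᵥ (A *ᵥ b + B *ᵥ a + (1/2:ℂ)•(C *ᵥ c))
    ∧ (A*B + B*A + (1/2:ℂ)•(C*C)) *ᵥ b = B *ᵥ (A *ᵥ b + B *ᵥ a + (1/2:ℂ)•(C *ᵥ c)))
    ∧ (A*B + B*A + (1/2:ℂ)•(C*C)) *ᵥ c = C *ᵥ (A *ᵥ b + B *ᵥ a + (1/2:ℂ)•(C *ᵥ c))) := by
  have hBA : B*A = A*B - C := by rw [← h3]; noncomm_ring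
  have hCA : C*A = A*C + (2:ℂ)•A := by rw [← h1]; noncomm_ring
  have hCB : C*B = B*C - (2:ℂ)•B := by
    have := h2; rw [sub_eq_iff_eq_add] at this; rw [this, neg_smul]; noncomm_ring
  have hBA' : ∀ x : V3, B *ᵥ (A *ᵥ x) = A *ᵥ (B *ᵥ x) - C *ᵥ x := by
    intro x; rw [mulVec_mulVec, mulVec_mulVec, hBA, sub_mulVec]
  have hCA' : ∀ x : V3, C *ᵥ (A *ᵥ x) = A *ᵥ (C *ᵥ x) + (2:ℂ)•(A *ᵥ x) := by
    intro x; rw [mulVec_mulVec, mulVec_mulVec, hCA, add_mulVec, smul_mulVec]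
  have hCB' : ∀ x : V3, C *ᵥ (B *ᵥ x) = B *ᵥ (C *ᵥ x) - (2:ℂ)•(B *ᵥ x) := by
    intro x; rw [mulVec_mulVec, mulVec_mulVec, hCB, sub_mulVec, smul_mulVec]
  have hCa : C *ᵥ a = A *ᵥ c + (2:ℂ)•a := by rw [← h4]; abel
  have hCb : C *ᵥ b = B *ᵥ c - (2:ℂ)•b := by
    have := h5; rw [sub_eq_iff_eq_add] at this; rw [this, neg_smul]; abel
  have hBa : B *ᵥ a = A *ᵥ b - c := by rw [← h6]; abel
  refine ⟨⟨?_, ?_⟩, ?_⟩ <;>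
  · simp only [← mulVec_mulVec, add_mulVec, sub_mulVec, smul_mulVec, mulVec_add,
      mulVec_sub, mulVec_smul, hBA', hCA', hCB', hCa, hCb, hBa, smul_add, smul_sub, smul_smul]
    module

/-- If the Casimir is singular, the representation kills a nonzero vector. -/
lemma exists_common_kernel {A B C : M3}
    (h1 : C*A - A*C = (2:ℂ)•A) (h2 : C*B - B*C = (-2:ℂ)•B) (h3 : A*B - B*A = C)
    (hdet : (A*B + B*A + (1/2:ℂ)•(C*C)).det = 0) :
    ∃ s : V3, s ≠ 0 ∧ A *ᵥ s = 0 ∧ B *ᵥ s = 0 ∧ C *ᵥ s = 0 := by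
  set Ω : M3 := A*B + B*A + (1/2:ℂ)•(C*C) with hΩ
  obtain ⟨⟨hΩA, hΩB⟩, hΩC⟩ := omega_comm h1 h2 h3
  -- the kernel of Ω is nonzero and invariant
  obtain ⟨s₀, hs₀ne, hs₀⟩ := (Matrix.exists_mulVec_eq_zero_iff).mpr hdet
  set K : Submodule ℂ V3 := LinearMap.ker (Matrix.mulVecLin Ω) with hK
  have hmemK : ∀ x : V3, x ∈ K ↔ Ω *ᵥ x = 0 := by
    intro x; rw [hK, LinearMap.mem_ker, Matrix.mulVecLin_apply]
  have hCK : ∀ x ∈ K, (Matrix.mulVecLin C) x ∈ K := by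
    intro x hx
    rw [hmemK] at hx ⊢
    rw [Matrix.mulVecLin_apply, mulVec_mulVec, hΩC, ← mulVec_mulVec, hx, mulVec_zero]
  haveI : Nontrivial K := by
    refine nontrivial_of_ne ⟨s₀, (hmemK s₀).mpr hs₀⟩ 0 ?_
    simp [Subtype.ext_iff, hs₀ne]
  -- eigenvector of C inside ker Ω
  obtain ⟨μ, hμ⟩ := Module.End.exists_eigenvalue ((Matrix.mulVecLin C).restrict hCK)
  obtain ⟨sv, hsv⟩ := hμ.exists_hasEigenvector
  obtain ⟨s, hsne, hsK, hCs⟩ : ∃ s : V3, s ≠ 0 ∧ Ω *ᵥ s = 0 ∧ C *ᵥ s = μ • s := by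
    refine ⟨(sv : V3), ?_, (hmemK _).mp sv.2, ?_⟩
    · intro h0
      exact hsv.right (Subtype.coe_injective (by simpa using h0))
    · have h2' := congrArg (Subtype.val : K → V3) hsv.apply_eq_smul
      simpa [LinearMap.restrict_apply, Matrix.mulVecLin_apply] using h2'
  -- nilpotency
  have hAnil : IsNilpotent A := nilp_of_weight two_ne_zero h1
  have hBnil : IsNilpotent B := nilp_of_weight (by norm_num : (-2:ℂ) ≠ 0) h2
  -- highest weight vector in ker Ω
  have hCA' : ∀ x : V3, C *ᵥ (A *ᵥ x) = A *ᵥ (C *ᵥ x) + (2:ℂ)•(A *ᵥ x) := by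
    intro x
    rw [mulVec_mulVec, mulVec_mulVec, show C*A = A*C + (2:ℂ)•A by rw [← h1]; noncomm_ring,
      add_mulVec, smul_mulVec]
  have hCB' : ∀ x : V3, C *ᵥ (B *ᵥ x) = B *ᵥ (C *ᵥ x) - (2:ℂ)•(B *ᵥ x) := by
    intro x
    rw [mulVec_mulVec, mulVec_mulVec, show C*B = B*C - (2:ℂ)•B by
      have := h2; rw [sub_eq_iff_eq_add] at this; rw [this, neg_smul]; noncomm_ring,
      sub_mulVec, smul_mulVec]
  have hchainC : ∀ k : ℕ, C *ᵥ (A^k *ᵥ s) = (μ + 2*k) • (A^k *ᵥ s) := by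
    intro k
    induction k with
    | zero => simpa using hCs
    | succ k ih =>
      rw [pow_succ', ← mulVec_mulVec, hCA', ih, mulVec_smul]
      push_cast
      module
  rw [← hΩ] at hΩA hΩB hΩC
  have hchainO : ∀ k : ℕ, Ω *ᵥ (A^k *ᵥ s) = 0 := by
    intro k
    induction k with
    | zero => simpa using hsK
    | succ k ih =>
      rw [pow_succ', ← mulVec_mulVec s A (A^k), mulVec_mulVec (A^k *ᵥ s) Ω A, hΩA,
        ← mulVec_mulVec (A^k *ᵥ s) A Ω, ih, mulVec_zero]
  -- top of the A-string
  obtain ⟨d, hd⟩ := hAnil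
  have hexA : ∃ k, A^k *ᵥ s = 0 := ⟨d, by rw [hd, zero_mulVec]⟩
  have hn₀ : A^(Nat.find hexA) *ᵥ s = 0 := Nat.find_spec hexA
  have hn₀pos : 0 < Nat.find hexA := by
    rcases Nat.eq_zero_or_pos (Nat.find hexA) with h0 | h
    · rw [h0, pow_zero, one_mulVec] at hn₀; exact absurd hn₀ hsne
    · exact h
  set m : ℕ := Nat.find hexA - 1 with hm
  have hms : A^m *ᵥ s ≠ 0 := Nat.find_min hexA (Nat.sub_lt hn₀pos one_pos)
  set t : V3 := A^m *ᵥ s with ht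
  set lam : ℂ := μ + 2*(m:ℂ) with hlamdef
  have hAt : A *ᵥ t = 0 := by
    rw [ht, mulVec_mulVec, ← pow_succ', show m + 1 = Nat.find hexA by omega]
    exact hn₀
  have hCt : C *ᵥ t = lam • t := hchainC m
  have hΩt : Ω *ᵥ t = 0 := hchainO m
  have hABmul : A*B = B*A + C := by rw [← h3]; noncomm_ring
  have hABt : A *ᵥ (B *ᵥ t) = lam • t := by
    rw [mulVec_mulVec, hABmul, add_mulVec, ← mulVec_mulVec, hAt, mulVec_zero, zero_add, hCt]
  have hlam2 : lam * (lam + 2) = 0 := by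
    have h0 : (lam + lam*lam/2) • t = 0 := by
      have e2 : (A*B) *ᵥ t = lam • t := by rw [← mulVec_mulVec t A B]; exact hABt
      have e3 : (B*A) *ᵥ t = 0 := by rw [← mulVec_mulVec t B A, hAt, mulVec_zero]
      have e4 : (C*C) *ᵥ t = (lam*lam) • t := by
        rw [← mulVec_mulVec t C C, hCt, mulVec_smul, hCt, smul_smul]
      have e1 : Ω *ᵥ t = (lam + lam*lam/2) • t := by
        rw [hΩ, add_mulVec, add_mulVec, smul_mulVec, e2, e3, e4]
        module
      rw [← e1]
      exact hΩt
    rcases smul_eq_zero.mp h0 with hc | hc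
    · linear_combination 2 * hc
    · exact absurd hc hms
  -- B-string from t
  have hchainCB : ∀ k : ℕ, C *ᵥ (B^k *ᵥ t) = (lam - 2*(k:ℂ)) • (B^k *ᵥ t) := by
    intro k
    induction k with
    | zero => simpa using hCt
    | succ k ih =>
      rw [pow_succ', ← mulVec_mulVec t B (B^k), hCB', ih, mulVec_smul, mulVec_mulVec t B (B^k),
        ← pow_succ']
      push_cast
      module
  have hchainAB : ∀ k : ℕ, A *ᵥ (B^(k+1) *ᵥ t) = (((k:ℂ)+1)*(lam - (k:ℂ))) • (B^k *ᵥ t) := by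
    intro k
    induction k with
    | zero => rw [pow_one, hABt, pow_zero, one_mulVec]; module
    | succ k ih =>
      rw [pow_succ' B (k+1), ← mulVec_mulVec t B (B^(k+1)),
        mulVec_mulVec (B^(k+1) *ᵥ t) A B, hABmul, add_mulVec,
        ← mulVec_mulVec (B^(k+1) *ᵥ t) B A, ih, mulVec_smul,
        mulVec_mulVec t B (B^k), ← pow_succ', hchainCB (k+1)]
      push_cast
      module
  obtain ⟨e, he⟩ := hBnil
  have hexB : ∃ k, B^k *ᵥ t = 0 := ⟨e, by rw [he, zero_mulVec]⟩
  have hn₁ : B^(Nat.find hexB) *ᵥ t = 0 := Nat.find_spec hexB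
  have hn₁pos : 0 < Nat.find hexB := by
    rcases Nat.eq_zero_or_pos (Nat.find hexB) with h0 | h
    · rw [h0, pow_zero, one_mulVec] at hn₁; exact absurd hn₁ hms
    · exact h
  set p : ℕ := Nat.find hexB - 1 with hp
  have hpt : B^p *ᵥ t ≠ 0 := Nat.find_min hexB (Nat.sub_lt hn₁pos one_pos)
  have hstep : (((p:ℂ)+1)*(lam - (p:ℂ))) • (B^p *ᵥ t) = 0 := by
    rw [← hchainAB p, show p + 1 = Nat.find hexB by omega, hn₁, mulVec_zero]
  have hcoeff : ((p:ℂ)+1)*(lam - (p:ℂ)) = 0 := by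
    rcases smul_eq_zero.mp hstep with hc | hc
    · exact hc
    · exact absurd hc hpt
  have hlamp : lam = (p:ℂ) := by
    rcases mul_eq_zero.mp hcoeff with hc | hc
    · exfalso
      have : ((p+1 : ℕ) : ℂ) = 0 := by push_cast; linear_combination hc
      exact absurd (Nat.cast_eq_zero.mp this) (Nat.succ_ne_zero p)
    · linear_combination hc
  have hlam0 : lam = 0 := by
    rcases mul_eq_zero.mp hlam2 with hc | hc
    · exact hc
    · exfalso
      have : ((p+2 : ℕ) : ℂ) = 0 := by push_cast; linear_combination hc - hlamp
      exact absurd (Nat.cast_eq_zero.mp this) (by omega)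
  have hp0 : p = 0 := by
    have : ((p : ℕ) : ℂ) = 0 := by rw [← hlamp, hlam0]
    exact Nat.cast_eq_zero.mp this
  have hBt : B *ᵥ t = 0 := by
    have := hn₁
    rw [show Nat.find hexB = 1 by omega, pow_one] at this
    exact this
  refine ⟨t, hms, hAt, hBt, ?_⟩
  rw [hCt, hlam0, zero_smul]

lemma matrix_contradiction {A B C : M3} {a b c : V3}
    (h1 : C*A - A*C = (2:ℂ)•A) (h2 : C*B - B*C = (-2:ℂ)•B) (h3 : A*B - B*A = C)
    (h4 : C *ᵥ a - A *ᵥ c = (2:ℂ)•a) (h5 : C *ᵥ b - B *ᵥ c = (-2:ℂ)•b)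
    (h6 : A *ᵥ b - B *ᵥ a = c)
    (hli : LinearIndependent ℂ ![a, b, c]) : False := by
  have hcard : Fintype.card (Fin 3) = Module.finrank ℂ V3 := by
    simp [Module.finrank_fin_fun]
  let 𝔅 : Module.Basis (Fin 3) ℂ V3 := basisOfLinearIndependentOfCardEqFinrank hli hcard
  have h𝔅 : ∀ i, 𝔅 i = ![a, b, c] i := fun i => by
    rw [show (𝔅 : Fin 3 → V3) = ![a,b,c] from coe_basisOfLinearIndependentOfCardEqFinrank _ _]
  have h𝔅0 : 𝔅 0 = a := h𝔅 0
  have h𝔅1 : 𝔅 1 = b := h𝔅 1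
  have h𝔅2 : 𝔅 2 = c := h𝔅 2
  by_cases hdet : IsUnit (A*B + B*A + (1/2:ℂ)•(C*C)).det
  · -- Casimir invertible : the cocycle is a coboundary, LSA trace argument
    set Ω : M3 := A*B + B*A + (1/2:ℂ)•(C*C) with hΩ
    set u : V3 := A *ᵥ b + B *ᵥ a + (1/2:ℂ)•(C *ᵥ c) with hu
    obtain ⟨⟨hΩA, hΩB⟩, hΩC⟩ := omega_comm h1 h2 h3
    obtain ⟨⟨hΩa, hΩb⟩, hΩc⟩ := omega_cocycle h1 h2 h3 h4 h5 h6
    rw [← hΩ] at hΩA hΩB hΩC hΩa hΩb hΩc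
    rw [← hu] at hΩa hΩb hΩc
    have hinv : Ω⁻¹ * Ω = 1 := nonsing_inv_mul _ hdet
    have hinv' : Ω * Ω⁻¹ = 1 := mul_nonsing_inv _ hdet
    have hcomm : ∀ X : M3, Ω * X = X * Ω → X * Ω⁻¹ = Ω⁻¹ * X := by
      intro X hX
      calc X * Ω⁻¹ = Ω⁻¹ * Ω * (X * Ω⁻¹) := by rw [hinv, one_mul]
        _ = Ω⁻¹ * (Ω * X) * Ω⁻¹ := by noncomm_ring
        _ = Ω⁻¹ * (X * Ω) * Ω⁻¹ := by rw [hX]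
        _ = Ω⁻¹ * X * (Ω * Ω⁻¹) := by noncomm_ring
        _ = Ω⁻¹ * X := by rw [hinv', mul_one]
    set v : V3 := Ω⁻¹ *ᵥ u with hv
    have hAv : A *ᵥ v = a := by
      rw [hv, mulVec_mulVec, hcomm A hΩA, ← mulVec_mulVec, ← hΩa, mulVec_mulVec, hinv,
        one_mulVec]
    have hBv : B *ᵥ v = b := by
      rw [hv, mulVec_mulVec, hcomm B hΩB, ← mulVec_mulVec, ← hΩb, mulVec_mulVec, hinv,
        one_mulVec]
    have hCv : C *ᵥ v = c := by
      rw [hv, mulVec_mulVec, hcomm C hΩC, ← mulVec_mulVec, ← hΩc, mulVec_mulVec, hinv,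
        one_mulVec]
    -- the linear map θ sending a ↦ A, b ↦ B, c ↦ C
    set θ : V3 →ₗ[ℂ] M3 := 𝔅.constr ℕ ![A, B, C] with hθ
    have hθa : θ a = A := by rw [← h𝔅0, hθ, Module.Basis.constr_basis]; rfl
    have hθb : θ b = B := by rw [← h𝔅1, hθ, Module.Basis.constr_basis]; rfl
    have hθc : θ c = C := by rw [← h𝔅2, hθ, Module.Basis.constr_basis]; rfl
    -- bilinear structure maps
    set G : V3 →ₗ[ℂ] Module.End ℂ V3 :=
      { toFun := fun w => (θ w).mulVecLin
        map_add' := by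
          intro x y; ext z j
          simp [Matrix.mulVecLin_apply, map_add, Matrix.add_mulVec]
        map_smul' := by
          intro r x; ext z j
          simp [Matrix.mulVecLin_apply, LinearMap.map_smul, Matrix.smul_mulVec] }
      with hG
    have hGapp : ∀ x y : V3, G x y = θ x *ᵥ y := fun x y => rfl
    set R : V3 →ₗ[ℂ] Module.End ℂ V3 := G.flip with hR
    have hRapp : ∀ x y : V3, R x y = θ y *ᵥ x := fun x y => rfl
    -- auxiliary sign-flipped relations
    have m6' : B *ᵥ a - A *ᵥ b = -c := by rw [← h6]; abel
    have m3' : B*A - A*B = -C := by rw [← h3]; abel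
    have m4' : A *ᵥ c - C *ᵥ a = (-2:ℂ)•a := by rw [← neg_sub, h4]; module
    have m1' : A*C - C*A = (-2:ℂ)•A := by rw [← neg_sub, h1]; module
    have m5' : B *ᵥ c - C *ᵥ b = (2:ℂ)•b := by rw [← neg_sub, h5]; module
    have m2' : B*C - C*B = (2:ℂ)•B := by rw [← neg_sub, h2]; module
    -- the cocycle identity on the nine pairs of basis vectors
    have k1aa : θ (θ a *ᵥ a - θ a *ᵥ a) = θ a * θ a - θ a * θ a := by simp
    have k1bb : θ (θ b *ᵥ b - θ b *ᵥ b) = θ b * θ b - θ b * θ b := by simp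
    have k1cc : θ (θ c *ᵥ c - θ c *ᵥ c) = θ c * θ c - θ c * θ c := by simp
    have k1ab : θ (θ a *ᵥ b - θ b *ᵥ a) = θ a * θ b - θ b * θ a := by
      rw [hθa, hθb, h6, hθc, h3]
    have k1ba : θ (θ b *ᵥ a - θ a *ᵥ b) = θ b * θ a - θ a * θ b := by
      rw [hθb, hθa, m6', map_neg, hθc, m3']
    have k1ca : θ (θ c *ᵥ a - θ a *ᵥ c) = θ c * θ a - θ a * θ c := by
      rw [hθc, hθa, h4, LinearMap.map_smul, hθa]; exact h1.symm
    have k1ac : θ (θ a *ᵥ c - θ c *ᵥ a) = θ a * θ c - θ c * θ a := by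
      rw [hθa, hθc, m4', LinearMap.map_smul, hθa]; exact m1'.symm
    have k1cb : θ (θ c *ᵥ b - θ b *ᵥ c) = θ c * θ b - θ b * θ c := by
      rw [hθc, hθb, h5, LinearMap.map_smul, hθb]; exact h2.symm
    have k1bc : θ (θ b *ᵥ c - θ c *ᵥ b) = θ b * θ c - θ c * θ b := by
      rw [hθb, hθc, m5', LinearMap.map_smul, hθb]; exact m2'.symm
    have k1 : ∀ x y : V3, (x = a ∨ x = b ∨ x = c) → (y = a ∨ y = b ∨ y = c) →
        θ (θ x *ᵥ y - θ y *ᵥ x) = θ x * θ y - θ y * θ x := by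
      rintro x y (rfl | rfl | rfl) (rfl | rfl | rfl)
      exacts [k1aa, k1ab, k1ac, k1ba, k1bb, k1bc, k1ca, k1cb, k1cc]
    -- the right multiplication operators of the induced left-symmetric product
    have hop : ∀ x y : V3, (x = a ∨ x = b ∨ x = c) → (y = a ∨ y = b ∨ y = c) →
        R (θ x *ᵥ y) = R y * R x + G x * R y - R y * G x := by
      intro x y hx hy
      apply 𝔅.ext
      intro j
      have hj : 𝔅 j = a ∨ 𝔅 j = b ∨ 𝔅 j = c := by
        fin_cases j <;> simp [h𝔅0, h𝔅1, h𝔅2]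
      have key := k1 (𝔅 j) x hj hx
      rw [map_sub] at key
      show θ (𝔅 j) *ᵥ (θ x *ᵥ y)
        = θ (θ (𝔅 j) *ᵥ x) *ᵥ y + θ x *ᵥ (θ (𝔅 j) *ᵥ y) - θ (θ x *ᵥ (𝔅 j)) *ᵥ y
      have expand : θ (θ (𝔅 j) *ᵥ x) *ᵥ y - θ (θ x *ᵥ (𝔅 j)) *ᵥ y
          = θ (𝔅 j) *ᵥ (θ x *ᵥ y) - θ x *ᵥ (θ (𝔅 j) *ᵥ y) := by
        rw [← sub_mulVec, key, sub_mulVec, mulVec_mulVec, mulVec_mulVec]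
      rw [show θ (θ (𝔅 j) *ᵥ x) *ᵥ y + θ x *ᵥ (θ (𝔅 j) *ᵥ y) - θ (θ x *ᵥ (𝔅 j)) *ᵥ y
          = (θ (θ (𝔅 j) *ᵥ x) *ᵥ y - θ (θ x *ᵥ (𝔅 j)) *ᵥ y) + θ x *ᵥ (θ (𝔅 j) *ᵥ y) from by
          abel, expand]
      abel
    -- hence the trace identity
    have htr : ∀ x y : V3, (x = a ∨ x = b ∨ x = c) → (y = a ∨ y = b ∨ y = c) →
        LinearMap.trace ℂ V3 (R (θ x *ᵥ y)) = LinearMap.trace ℂ V3 (R y * R x) := by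
      intro x y hx hy
      rw [hop x y hx hy, map_sub, map_add, LinearMap.trace_mul_comm ℂ (G x) (R y)]
      abel
    have mema : a = a ∨ a = b ∨ a = c := Or.inl rfl
    have memb : b = a ∨ b = b ∨ b = c := Or.inr (Or.inl rfl)
    have memc : c = a ∨ c = b ∨ c = c := Or.inr (Or.inr rfl)
    -- the trace of every right multiplication vanishes
    have phia : LinearMap.trace ℂ V3 (R a) = 0 := by
      have e : R (θ c *ᵥ a) - R (θ a *ᵥ c) = (2:ℂ) • R a := by
        rw [← map_sub, hθc, hθa, h4, LinearMap.map_smul]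
      have e2 : (2:ℂ) • LinearMap.trace ℂ V3 (R a) = 0 := by
        rw [← LinearMap.map_smul, ← e, map_sub, htr c a memc mema, htr a c mema memc,
          LinearMap.trace_mul_comm ℂ (R a) (R c), sub_self]
      rcases smul_eq_zero.mp e2 with h | h
      · norm_num at h
      · exact h
    have phib : LinearMap.trace ℂ V3 (R b) = 0 := by
      have e : R (θ c *ᵥ b) - R (θ b *ᵥ c) = (-2:ℂ) • R b := by
        rw [← map_sub, hθc, hθb, h5, LinearMap.map_smul]
      have e2 : (-2:ℂ) • LinearMap.trace ℂ V3 (R b) = 0 := by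
        rw [← LinearMap.map_smul, ← e, map_sub, htr c b memc memb, htr b c memb memc,
          LinearMap.trace_mul_comm ℂ (R b) (R c), sub_self]
      rcases smul_eq_zero.mp e2 with h | h
      · norm_num at h
      · exact h
    have phic : LinearMap.trace ℂ V3 (R c) = 0 := by
      have e : R (θ a *ᵥ b) - R (θ b *ᵥ a) = R c := by
        rw [← map_sub, hθa, hθb, h6]
      rw [← e, map_sub, htr a b mema memb, htr b a memb mema,
        LinearMap.trace_mul_comm ℂ (R a) (R b), sub_self]
    -- but the right multiplication by v is the identity
    have hRva : R v a = a := by show θ a *ᵥ v = a; rw [hθa, hAv]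
    have hRvb : R v b = b := by show θ b *ᵥ v = b; rw [hθb, hBv]
    have hRvc : R v c = c := by show θ c *ᵥ v = c; rw [hθc, hCv]
    have hRv : R v = LinearMap.id := by
      apply 𝔅.ext
      intro j
      rw [LinearMap.id_apply, h𝔅 j]
      fin_cases j
      · exact hRva
      · exact hRvb
      · exact hRvc
    have h3tr : LinearMap.trace ℂ V3 (R v) = 3 := by
      rw [hRv, LinearMap.trace_id, show Module.finrank ℂ V3 = 3 from Module.finrank_fin_fun ℂ]
      norm_num
    have hbase : ∀ j : Fin 3, LinearMap.trace ℂ V3 (R (𝔅 j)) = 0 := by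
      intro j
      rw [h𝔅 j]
      fin_cases j
      · exact phia
      · exact phib
      · exact phic
    have h0tr : LinearMap.trace ℂ V3 (R v) = 0 := by
      conv_lhs => rw [← Module.Basis.sum_repr 𝔅 v]
      rw [map_sum, map_sum]
      refine Finset.sum_eq_zero fun j _ => ?_
      rw [LinearMap.map_smul, LinearMap.map_smul, hbase j, smul_zero]
    rw [h0tr] at h3tr
    norm_num at h3tr
  · -- Casimir singular : the dual representation kills a vector, contradicting independence
    have hdet0 : (A*B + B*A + (1/2:ℂ)•(C*C)).det = 0 := by
      rwa [isUnit_iff_ne_zero, not_not] at hdet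
    have h1' : (-Cᵀ)*(-Aᵀ) - (-Aᵀ)*(-Cᵀ) = (2:ℂ)•(-Aᵀ) := by
      have e := congrArg Matrix.transpose h1
      rw [transpose_sub, transpose_mul, transpose_mul, transpose_smul] at e
      rw [neg_mul_neg, neg_mul_neg, smul_neg, ← e]
      abel
    have h2' : (-Cᵀ)*(-Bᵀ) - (-Bᵀ)*(-Cᵀ) = (-2:ℂ)•(-Bᵀ) := by
      have e := congrArg Matrix.transpose h2
      rw [transpose_sub, transpose_mul, transpose_mul, transpose_smul] at e
      rw [neg_mul_neg, neg_mul_neg, smul_neg, ← e]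
      abel
    have h3' : (-Aᵀ)*(-Bᵀ) - (-Bᵀ)*(-Aᵀ) = -Cᵀ := by
      have e := congrArg Matrix.transpose h3
      rw [transpose_sub, transpose_mul, transpose_mul] at e
      rw [neg_mul_neg, neg_mul_neg, ← e]
      abel
    have hdet' : ((-Aᵀ)*(-Bᵀ) + (-Bᵀ)*(-Aᵀ) + (1/2:ℂ)•((-Cᵀ)*(-Cᵀ))).det = 0 := by
      have e : (-Aᵀ)*(-Bᵀ) + (-Bᵀ)*(-Aᵀ) + (1/2:ℂ)•((-Cᵀ)*(-Cᵀ))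
          = (A*B + B*A + (1/2:ℂ)•(C*C))ᵀ := by
        rw [neg_mul_neg, neg_mul_neg, neg_mul_neg, transpose_add, transpose_add,
          transpose_mul, transpose_mul, transpose_smul, transpose_mul]
        abel
      rw [e, det_transpose]
      exact hdet0
    obtain ⟨s, hsne, hAs, hBs, hCs⟩ := exists_common_kernel h1' h2' h3' hdet'
    have hA : s ᵥ* A = 0 := by
      rw [← mulVec_transpose]; rw [neg_mulVec] at hAs; exact neg_eq_zero.mp hAs
    have hB : s ᵥ* B = 0 := by
      rw [← mulVec_transpose]; rw [neg_mulVec] at hBs; exact neg_eq_zero.mp hBs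
    have hC : s ᵥ* C = 0 := by
      rw [← mulVec_transpose]; rw [neg_mulVec] at hCs; exact neg_eq_zero.mp hCs
    have hsa : s ⬝ᵥ a = 0 := by
      have e := congrArg (dotProduct s) h4
      rw [dotProduct_sub, dotProduct_mulVec, dotProduct_mulVec, hA, hC, zero_dotProduct,
        zero_dotProduct, sub_zero, dotProduct_smul] at e
      have := e.symm
      rw [smul_eq_mul, mul_eq_zero] at this
      rcases this with h | h
      · norm_num at h
      · exact h
    have hsb : s ⬝ᵥ b = 0 := by
      have e := congrArg (dotProduct s) h5
      rw [dotProduct_sub, dotProduct_mulVec, dotProduct_mulVec, hB, hC, zero_dotProduct,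
        zero_dotProduct, sub_zero, dotProduct_smul] at e
      have := e.symm
      rw [smul_eq_mul, mul_eq_zero] at this
      rcases this with h | h
      · norm_num at h
      · exact h
    have hsc : s ⬝ᵥ c = 0 := by
      have e := congrArg (dotProduct s) h6
      rw [dotProduct_sub, dotProduct_mulVec, dotProduct_mulVec, hA, hB, zero_dotProduct,
        zero_dotProduct, sub_zero] at e
      exact e.symm
    set ℓ : V3 →ₗ[ℂ] ℂ :=
      { toFun := fun x => s ⬝ᵥ x
        map_add' := fun x y => dotProduct_add s x y
        map_smul' := fun r x => by simp [dotProduct_smul] } with hℓ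
    have hℓ0 : ℓ = 0 := by
      apply 𝔅.ext
      intro j
      rw [h𝔅 j, LinearMap.zero_apply]
      fin_cases j
      · exact hsa
      · exact hsb
      · exact hsc
    have hs0 : s = 0 := by
      funext i
      have e1 : ℓ (Pi.single i 1) = 0 := by rw [hℓ0]; rfl
      have e2 : ℓ (Pi.single i 1) = s i := by
        show s ⬝ᵥ Pi.single i 1 = s i
        rw [dotProduct_single, mul_one]
      rw [← e2, e1]
      rfl
    exact hsne hs0

section SL2Elements

open LieAlgebra.SpecialLinear

/-- The standard basis element `e` of `sl(2,ℂ)`. -/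
noncomputable def EE : sl (Fin 2) ℂ :=
  ⟨!![0,1;0,0], by
    show _ ∈ LinearMap.ker (traceLinearMap (Fin 2) ℂ ℂ)
    rw [LinearMap.mem_ker]; simp [Matrix.trace_fin_two]⟩

/-- The standard basis element `f` of `sl(2,ℂ)`. -/
noncomputable def FF : sl (Fin 2) ℂ :=
  ⟨!![0,0;1,0], by
    show _ ∈ LinearMap.ker (traceLinearMap (Fin 2) ℂ ℂ)
    rw [LinearMap.mem_ker]; simp [Matrix.trace_fin_two]⟩

/-- The standard basis element `h` of `sl(2,ℂ)`. -/
noncomputable def HH : sl (Fin 2) ℂ :=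
  ⟨!![1,0;0,-1], by
    show _ ∈ LinearMap.ker (traceLinearMap (Fin 2) ℂ ℂ)
    rw [LinearMap.mem_ker]; simp [Matrix.trace_fin_two]⟩

lemma bracket_HE : ⁅HH, EE⁆ = (2:ℂ) • EE := by
  apply Subtype.ext
  show (HH : Matrix (Fin 2) (Fin 2) ℂ) * EE - EE * HH = (2:ℂ) • (EE : Matrix (Fin 2) (Fin 2) ℂ)
  ext i j
  fin_cases i <;> fin_cases j <;>
    norm_num [EE, HH, Matrix.mul_apply, Fin.sum_univ_two]

lemma bracket_HF : ⁅HH, FF⁆ = (-2:ℂ) • FF := by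
  apply Subtype.ext
  show (HH : Matrix (Fin 2) (Fin 2) ℂ) * FF - FF * HH = (-2:ℂ) • (FF : Matrix (Fin 2) (Fin 2) ℂ)
  ext i j
  fin_cases i <;> fin_cases j <;>
    norm_num [FF, HH, Matrix.mul_apply, Fin.sum_univ_two]

lemma bracket_EF : ⁅EE, FF⁆ = HH := by
  apply Subtype.ext
  show (EE : Matrix (Fin 2) (Fin 2) ℂ) * FF - FF * EE = (HH : Matrix (Fin 2) (Fin 2) ℂ)
  ext i j
  fin_cases i <;> fin_cases j <;>
    norm_num [EE, FF, HH, Matrix.mul_apply, Fin.sum_univ_two]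

end SL2Elements

end NoFlatSL2

/-- There is no Lie algebra monomorphism from `sl(2,ℂ)` into `gl(3,ℂ) ⋉ ℂ³`
whose image intersects the isotropy subalgebra `gl(3,ℂ) × {0}` trivially. -/
theorem no_flat_affine_structure_sl2 :
    ¬ ∃ i : (LieAlgebra.SpecialLinear.sl (Fin 2) ℂ) →ₗ[ℂ]
        (Matrix (Fin 3) (Fin 3) ℂ × (Fin 3 → ℂ)),
      Function.Injective i ∧
      (∀ x y, i ⁅x, y⁆ = affBracket (i x) (i y)) ∧
      (∀ x, (i x).2 = 0 → i x = 0) := by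
  rintro ⟨i, hinj, hbr, h0⟩
  open NoFlatSL2 in
  -- name the images of the basis vectors
  set A : M3 := (i EE).1 with hA
  set a : V3 := (i EE).2 with ha
  set B : M3 := (i FF).1 with hB
  set b : V3 := (i FF).2 with hb
  set C : M3 := (i HH).1 with hC
  set c : V3 := (i HH).2 with hc
  -- the six structure relations
  have he1 := hbr HH EE
  rw [bracket_HE, LinearMap.map_smul] at he1
  have h1 : C*A - A*C = (2:ℂ)•A := congrArg Prod.fst he1.symm
  have h4 : C *ᵥ a - A *ᵥ c = (2:ℂ)•a := congrArg Prod.snd he1.symm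
  have he2 := hbr HH FF
  rw [bracket_HF, LinearMap.map_smul] at he2
  have h2 : C*B - B*C = (-2:ℂ)•B := congrArg Prod.fst he2.symm
  have h5 : C *ᵥ b - B *ᵥ c = (-2:ℂ)•b := congrArg Prod.snd he2.symm
  have he3 := hbr EE FF
  rw [bracket_EF] at he3
  have h3 : A*B - B*A = C := congrArg Prod.fst he3.symm
  have h6 : A *ᵥ b - B *ᵥ a = c := congrArg Prod.snd he3.symm
  -- linear independence of a, b, c
  have hli : LinearIndependent ℂ ![a, b, c] := by
    rw [Fintype.linearIndependent_iff]
    intro g hg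
    have hsum : (i (g 0 • EE + g 1 • FF + g 2 • HH)).2 = 0 := by
      rw [map_add, map_add, LinearMap.map_smul, LinearMap.map_smul, LinearMap.map_smul]
      have : ∀ x y : Matrix (Fin 3) (Fin 3) ℂ × (Fin 3 → ℂ), (x + y).2 = x.2 + y.2 :=
        fun _ _ => rfl
      show g 0 • a + g 1 • b + g 2 • c = 0
      simpa [Fin.sum_univ_three] using hg
    have hzero : g 0 • EE + g 1 • FF + g 2 • HH = 0 := by
      have := h0 _ hsum
      have h00 : i (g 0 • EE + g 1 • FF + g 2 • HH) = i 0 := by rw [this, map_zero]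
      exact hinj h00
    have hmat := congrArg (Subtype.val :
      (LieAlgebra.SpecialLinear.sl (Fin 2) ℂ) → Matrix (Fin 2) (Fin 2) ℂ) hzero
    simp only [AddSubmonoid.coe_add, Submodule.coe_toAddSubmonoid, SetLike.val_smul,
      ZeroMemClass.coe_zero] at hmat
    have key : g 0 • !![(0:ℂ),1;0,0] + g 1 • !![(0:ℂ),0;1,0] + g 2 • !![(1:ℂ),0;0,-1] = 0 := by
      simpa [EE, FF, HH] using hmat
    intro j
    fin_cases j
    · have := congrFun (congrFun key 0) 1
      simpa using this
    · have := congrFun (congrFun key 1) 0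
      simpa using this
    · have := congrFun (congrFun key 0) 0
      simpa using this
  exact matrix_contradiction h1 h2 h3 h4 h5 h6 hli
end

section
/- Every 3-dimensional complex solvable unimodular Lie algebra (i.e. ℂ³, heis, or sol) admits a Lie algebra monomorphism into gl(3,ℂ) ⋉ ℂ³ whose image intersects the isotropy gl(3,ℂ) × {0} trivially. -/
set_option maxHeartbeats 1000000
open Matrix
noncomputable def affB {n : ℕ} : (Matrix (Fin n) (Fin n) ℂ × (Fin n → ℂ)) →ₗ[ℂ]
    (Matrix (Fin n) (Fin n) ℂ × (Fin n → ℂ)) →ₗ[ℂ] (Matrix (Fin n) (Fin n) ℂ × (Fin n → ℂ)) :=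
  LinearMap.mk₂ ℂ affBracket
    (by intro p p' q
        simp only [affBracket, Prod.fst_add, Prod.snd_add, add_mul, mul_add,
          Matrix.add_mulVec, Matrix.mulVec_add, Prod.mk_add_mk]
        rw [Prod.mk.injEq]; constructor <;> abel)
    (by intro c p q
        simp only [affBracket, Prod.smul_fst, Prod.smul_snd, Prod.smul_mk,
          Matrix.smul_mulVec, Matrix.mulVec_smul, smul_sub, smul_mul_assoc,
          mul_smul_comm])
    (by intro p q q'
        simp only [affBracket, Prod.fst_add, Prod.snd_add, add_mul, mul_add,
          Matrix.add_mulVec, Matrix.mulVec_add, Prod.mk_add_mk]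
        rw [Prod.mk.injEq]; constructor <;> abel)
    (by intro c p q
        simp only [affBracket, Prod.smul_fst, Prod.smul_snd, Prod.smul_mk,
          Matrix.smul_mulVec, Matrix.mulVec_smul, smul_sub, smul_mul_assoc,
          mul_smul_comm])

theorem embed_of_basis {L : Type*} [LieRing L] [LieAlgebra ℂ L]
    (b : Module.Basis (Fin 3) ℂ L) (p q r s : ℂ)
    (h12 : ⁅b 1, b 2⁆ = 0)
    (h01 : ⁅b 0, b 1⁆ = p • b 1 + q • b 2)
    (h02 : ⁅b 0, b 2⁆ = r • b 1 + s • b 2) :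
    ∃ i : L →ₗ[ℂ] Matrix (Fin 3) (Fin 3) ℂ × (Fin 3 → ℂ),
      Function.Injective i ∧ (∀ x y, i ⁅x, y⁆ = affBracket (i x) (i y)) ∧
      (∀ x, (i x).2 = 0 → i x = 0) := by
  set M : Matrix (Fin 3) (Fin 3) ℂ := !![0,0,0; 0,p,r; 0,q,s] with hM
  set i : L →ₗ[ℂ] Matrix (Fin 3) (Fin 3) ℂ × (Fin 3 → ℂ) :=
    LinearMap.prod
      ((((Finsupp.lapply 0).comp (b.repr.toLinearMap))).smulRight M)
      ((Finsupp.linearEquivFunOnFinite ℂ ℂ (Fin 3)).toLinearMap.comp b.repr.toLinearMap)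
    with hi
  have hival : ∀ x, i x = (b.repr x 0 • M, fun j => b.repr x j) := fun x => rfl
  refine ⟨i, ?_, ?_, ?_⟩
  · intro x y h
    apply b.repr.injective
    ext j
    exact congrFun (congrArg Prod.snd h) j
  · have key : ((LieModule.toEnd ℂ L L : L →ₗ[ℂ] Module.End ℂ L).compr₂ i)
        = affB.compl₁₂ i i := by
      have hb0 : i (b 0) = (M, ![1,0,0]) := by
        rw [hival, b.repr_self]
        refine Prod.ext ?_ (funext fun j => ?_)
        · simp
        · fin_cases j <;> simp [Finsupp.single_apply]
      have hb1 : i (b 1) = (0, ![0,1,0]) := by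
        rw [hival, b.repr_self]
        refine Prod.ext ?_ (funext fun j => ?_)
        · simp [Finsupp.single_apply]
        · fin_cases j <;> simp [Finsupp.single_apply]
      have hb2 : i (b 2) = (0, ![0,0,1]) := by
        rw [hival, b.repr_self]
        refine Prod.ext ?_ (funext fun j => ?_)
        · simp [Finsupp.single_apply]
        · fin_cases j <;> simp [Finsupp.single_apply]
      have h10 : ⁅b 1, b 0⁆ = -(p • b 1 + q • b 2) := by rw [← lie_skew, h01]
      have h20 : ⁅b 2, b 0⁆ = -(r • b 1 + s • b 2) := by rw [← lie_skew, h02]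
      have h21 : ⁅b 2, b 1⁆ = 0 := by rw [← lie_skew, h12, neg_zero]
      refine b.ext fun k => b.ext fun l => ?_
      simp only [LinearMap.compr₂_apply, LinearMap.compl₁₂_apply, LieHom.coe_toLinearMap,
        LieModule.toEnd_apply_apply]
      fin_cases k <;> fin_cases l <;>
        (refine Prod.ext ?_ (funext fun j => ?_) <;>
          [skip; fin_cases j] <;>
          simp [lie_self, h01, h02, h12, h10, h20, h21, hb0, hb1, hb2, affB, affBracket,
            hM, Matrix.mulVec, Fin.sum_univ_three])
    intro x y
    have h2 := LinearMap.congr_fun (LinearMap.congr_fun key x) y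
    simpa [LinearMap.compr₂_apply, LinearMap.compl₁₂_apply, LieModule.toEnd_apply_apply,
      affB, LinearMap.mk₂_apply] using h2
  · intro x h
    have h0 : b.repr x = 0 := by ext j; exact congrFun h j
    have : x = 0 := by
      have := b.repr.map_eq_zero_iff.mp h0
      exact this
    rw [this, map_zero]

/-- Every 3-dimensional complex solvable unimodular Lie algebra admits a Lie
algebra monomorphism into `gl(3,ℂ) ⋉ ℂ³` whose image intersects the isotropy
`gl(3,ℂ) × {0}` trivially. -/
theorem solvable_unimodular_dim3_embeds_affine {L : Type*} [LieRing L]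
    [LieAlgebra ℂ L] [FiniteDimensional ℂ L]
    (hdim : Module.finrank ℂ L = 3)
    (hsolv : LieAlgebra.IsSolvable L)
    (hunimod : ∀ x : L, LinearMap.trace ℂ L (LieAlgebra.ad ℂ L x) = 0) :
    ∃ i : L →ₗ[ℂ] Matrix (Fin 3) (Fin 3) ℂ × (Fin 3 → ℂ),
      Function.Injective i ∧
      (∀ x y, i ⁅x, y⁆ = affBracket (i x) (i y)) ∧
      (∀ x, (i x).2 = 0 → i x = 0) := by
  classical
  have hnt : Nontrivial L := Module.nontrivial_of_finrank_pos (R := ℂ) (by rw [hdim]; norm_num)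
  set I : LieIdeal ℂ L := LieAlgebra.derivedSeries ℂ L 1 with hI
  set V : Submodule ℂ L := I.toSubmodule with hV
  have hVmem : ∀ x y : L, ⁅x, y⁆ ∈ V := by
    intro x y
    have hItop : I = ⁅(⊤ : LieIdeal ℂ L), ⊤⁆ := by
      rw [hI, LieAlgebra.derivedSeries_def, LieAlgebra.derivedSeriesOfIdeal_succ,
        LieAlgebra.derivedSeriesOfIdeal_zero]
    show ⁅x, y⁆ ∈ I
    rw [hItop]
    exact LieSubmodule.lie_mem_lie (LieSubmodule.mem_top x) (LieSubmodule.mem_top y)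
  have hVne : V ≠ ⊤ := by
    have h1 : I ≠ ⊤ := (LieAlgebra.derivedSeries_lt_top_of_solvable (R := ℂ) (L := L)).ne
    intro h
    apply h1
    rw [← LieSubmodule.toSubmodule_inj]
    rw [← hV] at *
    rw [h, LieSubmodule.top_toSubmodule]
  have hVlt : Module.finrank ℂ V < 3 := by
    rw [← hdim]
    exact Submodule.finrank_lt hVne
  -- trace formula
  have htr : ∀ (b : Module.Basis (Fin 3) ℂ L) (x : L),
      LinearMap.trace ℂ L (LieAlgebra.ad ℂ L x)
        = b.repr ⁅x, b 0⁆ 0 + b.repr ⁅x, b 1⁆ 1 + b.repr ⁅x, b 2⁆ 2 := by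
    intro b x
    rw [LinearMap.trace_eq_matrix_trace ℂ b, Matrix.trace]
    simp [Matrix.diag, LinearMap.toMatrix_apply, LieAlgebra.ad_apply, Fin.sum_univ_three]
  have hcases : Module.finrank ℂ V = 0 ∨ Module.finrank ℂ V = 1 ∨ Module.finrank ℂ V = 2 := by
    omega
  rcases hcases with h1 | h1 | h1
  · -- abelian case
    have hbot : V = ⊥ := Submodule.finrank_eq_zero.mp h1
    have hab : ∀ x y : L, ⁅x, y⁆ = 0 := by
      intro x y
      have := hVmem x y
      rwa [hbot, Submodule.mem_bot] at this
    have b : Module.Basis (Fin 3) ℂ L := Module.finBasisOfFinrankEq ℂ L hdim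
    exact embed_of_basis b 0 0 0 0 (hab _ _) (by rw [hab]; simp) (by rw [hab]; simp)
  · -- dim V = 1
    have hVb : V ≠ ⊥ := by
      intro h
      rw [h] at h1
      simp at h1
    obtain ⟨z, hzV, hz0⟩ := Submodule.exists_mem_ne_zero_of_ne_bot hVb
    have hspanz : Submodule.span ℂ ({z} : Set L) = V := by
      apply Submodule.eq_of_le_of_finrank_le
        ((Submodule.span_le).mpr (by simpa using hzV))
      rw [h1, finrank_span_singleton hz0]
    obtain ⟨u, -, hu⟩ := SetLike.exists_of_lt
      (span_lt_top_of_card_lt_finrank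
        (s := ({z} : Set L)) (by rw [hdim]; simp))
    obtain ⟨v, -, hv⟩ := SetLike.exists_of_lt
      (span_lt_top_of_card_lt_finrank
        (s := ({z, u} : Set L)) (by
          rw [hdim]
          refine lt_of_le_of_lt ?_ (by norm_num : (2:ℕ) < 3)
          rw [Set.toFinset_insert, Set.toFinset_singleton]
          exact (Finset.card_insert_le _ _).trans (by simp)))
    have hrange2 : Set.range ![u, z] = {u, z} := by
      ext w
      constructor
      · rintro ⟨j, rfl⟩
        fin_cases j <;> simp
      · rintro (rfl | rfl)
        exacts [⟨0, rfl⟩, ⟨1, rfl⟩]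
    have li : LinearIndependent ℂ ![v, u, z] := by
      rw [show ![v, u, z] = Fin.cons v ![u, z] from rfl, linearIndependent_fin_cons]
      refine ⟨?_, ?_⟩
      · rw [show ![u, z] = Fin.cons u ![z] from rfl, linearIndependent_fin_cons]
        refine ⟨?_, ?_⟩
        · exact linearIndependent_unique_iff.mpr hz0
        · intro hmem
          apply hu
          simpa using hmem
      · intro hmem
        apply hv
        rw [hrange2] at hmem
        have : Submodule.span ℂ ({u, z} : Set L) ≤ Submodule.span ℂ ({z, u} : Set L) := by
          apply Submodule.span_le.mpr
          rintro w (rfl | rfl)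
          · exact Submodule.subset_span (by simp)
          · exact Submodule.subset_span (by simp)
        exact this hmem
    -- z is central
    have hcent : ∀ x : L, ⁅x, z⁆ = 0 := by
      intro x
      obtain ⟨c, hc⟩ := Submodule.mem_span_singleton.mp (hspanz ▸ hVmem x z)
      set bb := basisOfLinearIndependentOfCardEqFinrank li (by rw [hdim]; simp) with hbbdef
      have hbb : ⇑bb = ![v, u, z] := coe_basisOfLinearIndependentOfCardEqFinrank _ _
      have e0 : bb 0 = v := by rw [hbb]; rfl
      have e1 : bb 1 = u := by rw [hbb]; rfl
      have e2 : bb 2 = z := by rw [hbb]; rfl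
      have h0 := hunimod x
      rw [htr bb x] at h0
      obtain ⟨cv, hcv⟩ := Submodule.mem_span_singleton.mp (hspanz ▸ hVmem x v)
      obtain ⟨cu, hcu⟩ := Submodule.mem_span_singleton.mp (hspanz ▸ hVmem x u)
      have t0 : bb.repr ⁅x, bb 0⁆ 0 = 0 := by
        rw [e0, ← hcv, ← e2, _root_.map_smul, bb.repr_self]
        simp [Finsupp.single_apply]
      have t1 : bb.repr ⁅x, bb 1⁆ 1 = 0 := by
        rw [e1, ← hcu, ← e2, _root_.map_smul, bb.repr_self]
        simp [Finsupp.single_apply]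
      have t2 : bb.repr ⁅x, bb 2⁆ 2 = c := by
        rw [e2, ← hc, ← e2, _root_.map_smul, bb.repr_self]
        simp [Finsupp.single_apply]
      rw [t0, t1, t2] at h0
      simp at h0
      rw [← hc, h0, zero_smul]
    have li2 : LinearIndependent ℂ ![u, z, v] := by
      have heq : ![u, z, v] = ![v, u, z] ∘ (finRotate 3) := by
        funext j
        fin_cases j <;> rfl
      rw [heq]
      exact li.comp _ (finRotate 3).injective
    set b := basisOfLinearIndependentOfCardEqFinrank li2 (by rw [hdim]; simp) with hbdef
    have hb : ⇑b = ![u, z, v] := coe_basisOfLinearIndependentOfCardEqFinrank _ _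
    have e0 : b 0 = u := by rw [hb]; rfl
    have e1 : b 1 = z := by rw [hb]; rfl
    have e2 : b 2 = v := by rw [hb]; rfl
    obtain ⟨c, hc⟩ := Submodule.mem_span_singleton.mp (hspanz ▸ hVmem u v)
    refine embed_of_basis b 0 0 c 0 ?_ ?_ ?_
    · rw [e1, e2, ← lie_skew, hcent, neg_zero]
    · rw [e0, e1, hcent]
      simp
    · rw [e0, e1, e2, ← hc]
      simp
  · -- dim V = 2
    have instV : FiniteDimensional ℂ V := inferInstance
    have bV : Module.Basis (Fin 2) ℂ V := Module.finBasisOfFinrankEq ℂ V h1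
    set f := (bV 0 : L) with hfdef
    set g := (bV 1 : L) with hgdef
    have hfV : f ∈ V := (bV 0).2
    have hgV : g ∈ V := (bV 1).2
    have hmem2 : ∀ w ∈ V, ∃ a c : ℂ, w = a • f + c • g := by
      intro w hw
      refine ⟨bV.repr ⟨w, hw⟩ 0, bV.repr ⟨w, hw⟩ 1, ?_⟩
      have hs := bV.sum_repr ⟨w, hw⟩
      have := congrArg (V.subtype) hs
      rw [Fin.sum_univ_two] at this
      simpa using this.symm
    have lifg : LinearIndependent ℂ ![f, g] := by
      have := bV.linearIndependent.map' V.subtype (Submodule.ker_subtype V)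
      have heq : ![f, g] = (V.subtype) ∘ bV := by
        funext j
        fin_cases j <;> rfl
      rw [heq]
      exact this
    obtain ⟨e, -, he⟩ := SetLike.exists_of_lt (show V < ⊤ from lt_top_iff_ne_top.mpr hVne)
    by_cases hfg : ⁅f, g⁆ = 0
    · -- V abelian
      have li3 : LinearIndependent ℂ ![e, f, g] := by
        rw [show ![e, f, g] = Fin.cons e ![f, g] from rfl, linearIndependent_fin_cons]
        refine ⟨lifg, ?_⟩
        intro hmem
        apply he
        have hsub : Submodule.span ℂ (Set.range ![f, g]) ≤ V := by
          apply Submodule.span_le.mpr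
          rintro w ⟨j, rfl⟩
          fin_cases j
          · exact hfV
          · exact hgV
        exact hsub hmem
      set b := basisOfLinearIndependentOfCardEqFinrank li3 (by rw [hdim]; simp) with hbdef
      have hb : ⇑b = ![e, f, g] := coe_basisOfLinearIndependentOfCardEqFinrank _ _
      have e0 : b 0 = e := by rw [hb]; rfl
      have e1 : b 1 = f := by rw [hb]; rfl
      have e2 : b 2 = g := by rw [hb]; rfl
      obtain ⟨p, q, hpq⟩ := hmem2 ⁅e, f⁆ (hVmem e f)
      obtain ⟨r, s, hrs⟩ := hmem2 ⁅e, g⁆ (hVmem e g)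
      refine embed_of_basis b p q r s ?_ ?_ ?_
      · rw [e1, e2, hfg]
      · rw [e0, e1, e2, hpq]
      · rw [e0, e1, e2, hrs]
    · -- V nonabelian: contradiction with unimodularity
      exfalso
      set z := ⁅f, g⁆ with hzdef
      have hzV : z ∈ V := hVmem f g
      obtain ⟨α, β, hαβ⟩ := hmem2 z hzV
      have hfz : ⁅f, z⁆ = β • z := by
        calc ⁅f, z⁆ = ⁅f, α • f + β • g⁆ := by rw [← hαβ]
          _ = β • ⁅f, g⁆ := by
              rw [lie_add, lie_smul, lie_smul, lie_self, smul_zero, zero_add]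
          _ = β • z := by rw [← hzdef]
      have hgz : ⁅g, z⁆ = -(α • z) := by
        calc ⁅g, z⁆ = ⁅g, α • f + β • g⁆ := by rw [← hαβ]
          _ = α • ⁅g, f⁆ := by
              rw [lie_add, lie_smul, lie_smul, lie_self, smul_zero, add_zero]
          _ = -(α • z) := by rw [← lie_skew, ← hzdef, smul_neg]
      obtain ⟨h, hhV, hhz⟩ : ∃ h, h ∈ V ∧ ⁅h, z⁆ = z := by
        by_cases hβ : β = 0
        · have hα : α ≠ 0 := by
            intro hα
            apply hfg
            rw [hzdef] at hαβ
            rw [hzdef, hαβ, hα, hβ, zero_smul, zero_smul, add_zero]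
          refine ⟨(-α)⁻¹ • g, Submodule.smul_mem _ _ hgV, ?_⟩
          rw [smul_lie, hgz, show -(α • z) = (-α) • z by rw [neg_smul], smul_smul,
            inv_mul_cancel₀ (neg_ne_zero.mpr hα), one_smul]
        · refine ⟨β⁻¹ • f, Submodule.smul_mem _ _ hfV, ?_⟩
          rw [smul_lie, hfz, smul_smul, inv_mul_cancel₀ hβ, one_smul]
      have lihz : LinearIndependent ℂ ![h, z] := by
        rw [show ![h, z] = Fin.cons h ![z] from rfl, linearIndependent_fin_cons]
        refine ⟨linearIndependent_unique_iff.mpr hfg, ?_⟩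
        intro hmem
        obtain ⟨c, hc⟩ : ∃ c : ℂ, c • z = h :=
          Submodule.mem_span_singleton.mp (by simpa using hmem)
        apply hfg
        have hzz : ⁅h, z⁆ = 0 := by rw [← hc, smul_lie, lie_self, smul_zero]
        rw [hhz] at hzz
        exact hzz
      have hrangehz : Set.range ![h, z] = {h, z} := by
        ext w
        constructor
        · rintro ⟨j, rfl⟩
          fin_cases j <;> simp
        · rintro (rfl | rfl)
          exacts [⟨0, rfl⟩, ⟨1, rfl⟩]
      have hspanhz : Submodule.span ℂ ({h, z} : Set L) = V := by
        apply Submodule.eq_of_le_of_finrank_le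
        · apply Submodule.span_le.mpr
          rintro w (rfl | rfl)
          exacts [hhV, hzV]
        · rw [h1, ← hrangehz, finrank_span_eq_card lihz]
          simp
      have li3 : LinearIndependent ℂ ![e, h, z] := by
        rw [show ![e, h, z] = Fin.cons e ![h, z] from rfl, linearIndependent_fin_cons]
        refine ⟨lihz, ?_⟩
        intro hmem
        apply he
        rw [hrangehz, hspanhz] at hmem
        exact hmem
      set bb := basisOfLinearIndependentOfCardEqFinrank li3 (by rw [hdim]; simp) with hbbdef
      have hbb : ⇑bb = ![e, h, z] := coe_basisOfLinearIndependentOfCardEqFinrank _ _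
      have e0 : bb 0 = e := by rw [hbb]; rfl
      have e1 : bb 1 = h := by rw [hbb]; rfl
      have e2 : bb 2 = z := by rw [hbb]; rfl
      have h0 := hunimod h
      rw [htr bb h] at h0
      obtain ⟨a, c, hac⟩ : ∃ a c : ℂ, a • h + c • z = ⁅h, e⁆ := by
        have := hVmem h e
        rw [← hspanhz] at this
        exact Submodule.mem_span_pair.mp this
      have t0 : bb.repr ⁅h, bb 0⁆ 0 = 0 := by
        rw [e0, ← hac, ← e1, ← e2, map_add, _root_.map_smul, _root_.map_smul,
          bb.repr_self, bb.repr_self]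
        simp [Finsupp.single_apply]
      have t1 : bb.repr ⁅h, bb 1⁆ 1 = 0 := by
        rw [e1, lie_self]
        simp
      have t2 : bb.repr ⁅h, bb 2⁆ 2 = 1 := by
        rw [e2, hhz, ← e2, bb.repr_self]
        simp
      rw [t0, t1, t2] at h0
      norm_num at h0
end

section
/- If i : 𝔤 → gl(n,ℂ) ⋉ ℂⁿ is a Lie algebra homomorphism and 𝔤 has no nonzero abelian ideal, then p₁ ∘ i is injective if and only if i is injective. -/
open Matrix

/-- If `i : 𝔤 → gl(n,ℂ) ⋉ ℂⁿ` is a Lie algebra homomorphism and `𝔤` has no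
nonzero abelian ideal, then `p₁ ∘ i` is injective if and only if `i` is
injective, where `p₁ : (A,v) ↦ A` is the projection onto `gl(n,ℂ)`. -/
theorem proj_injective_iff_injective {L : Type*} [LieRing L] [LieAlgebra ℂ L]
    (habel : ∀ I : LieIdeal ℂ L, IsLieAbelian I → I = ⊥) {n : ℕ}
    (i : L →ₗ[ℂ] Matrix (Fin n) (Fin n) ℂ × (Fin n → ℂ))
    (hbr : ∀ x y, i ⁅x, y⁆ = affBracket (i x) (i y)) :
    Function.Injective (fun x => (i x).1) ↔ Function.Injective i := by
  constructor
  · intro h x y hxy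
    exact h (by simp [hxy])
  · intro hi
    set K : LieIdeal ℂ L :=
      { carrier := {x | (i x).1 = 0}
        add_mem' := by
          intro a b ha hb
          simp only [Set.mem_setOf_eq, map_add, Prod.fst_add] at *
          rw [ha, hb, add_zero]
        zero_mem' := by simp
        smul_mem' := by
          intro c a ha
          simp only [Set.mem_setOf_eq] at *
          rw [i.map_smul, Prod.smul_fst, ha, smul_zero]
        lie_mem := by
          intro x y hy
          simp only [Set.mem_setOf_eq] at *
          rw [hbr]
          simp [affBracket, hy] } with hK
    have habK : IsLieAbelian K := by
      constructor
      intro a b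
      have hmema : (i a.1).1 = 0 := a.2
      have hmemb : (i b.1).1 = 0 := b.2
      have : ⁅(a : L), (b : L)⁆ = 0 := by
        apply hi
        rw [hbr, map_zero]
        simp [affBracket, hmema, hmemb]
      exact Subtype.ext (by simpa using this)
    have hKbot : K = ⊥ := habel K habK
    intro x y hxy
    have hmem : x - y ∈ K := by
      show (i (x - y)).1 = 0
      simp only [map_sub, Prod.fst_sub]
      simpa [sub_eq_zero] using hxy
    rw [hKbot, LieSubmodule.mem_bot, sub_eq_zero] at hmem
    exact hmem
end

section
/- Every complex unimodular Lie algebra of dimension 3 that is solvable is isomorphic to ℂ³, to the Heisenberg algebra heis, or to the algebra sol. -/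
open Module

lemma my_trace_eq_sum_repr {K M : Type*} [Field K] [AddCommGroup M] [Module K M]
    {n : ℕ} (b : Basis (Fin n) K M) (f : M →ₗ[K] M) :
    LinearMap.trace K M f = ∑ i, b.repr (f (b i)) i := by
  rw [LinearMap.trace_eq_matrix_trace K b f, Matrix.trace]
  simp [Matrix.diag, LinearMap.toMatrix_apply]

lemma my_trace_restrict {K M : Type*} [Field K] [AddCommGroup M] [Module K M]
    [FiniteDimensional K M]
    (p : Submodule K M) (f : M →ₗ[K] M) (h : ∀ y, f y ∈ p)
    (h' : ∀ y ∈ p, f y ∈ p) :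
    LinearMap.trace K M f = LinearMap.trace K p (f.restrict h') := by
  have h1 : p.subtype.comp (f.codRestrict p h) = f := by ext y; rfl
  have h2 : (f.codRestrict p h).comp p.subtype = f.restrict h' := by ext y; rfl
  calc LinearMap.trace K M f
      = LinearMap.trace K M (p.subtype.comp (f.codRestrict p h)) := by rw [h1]
    _ = LinearMap.trace K p ((f.codRestrict p h).comp p.subtype) :=
        (LinearMap.trace_comp_comm' p.subtype (f.codRestrict p h)).symm
    _ = LinearMap.trace K p (f.restrict h') := by rw [h2]

/-- Every 3-dimensional complex solvable unimodular Lie algebra is isomorphic to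
`ℂ³` (abelian), to the Heisenberg algebra `heis` (`[e₁,e₂] = e₃`, other brackets
zero), or to `sol` (`[e₁,e₂] = e₂`, `[e₁,e₃] = −e₃`, `[e₂,e₃] = 0`): there is a
basis realizing one of the three sets of bracket relations. -/
theorem classification_solvable_unimodular_dim3 {L : Type*} [LieRing L]
    [LieAlgebra ℂ L] [FiniteDimensional ℂ L]
    (hdim : Module.finrank ℂ L = 3)
    (hsolv : LieAlgebra.IsSolvable L)
    (hunimod : ∀ x : L, LinearMap.trace ℂ L (LieAlgebra.ad ℂ L x) = 0) :
    ∃ b : Module.Basis (Fin 3) ℂ L,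
      (⁅b 0, b 1⁆ = 0 ∧ ⁅b 0, b 2⁆ = 0 ∧ ⁅b 1, b 2⁆ = 0) ∨
      (⁅b 0, b 1⁆ = b 2 ∧ ⁅b 0, b 2⁆ = 0 ∧ ⁅b 1, b 2⁆ = 0) ∨
      (⁅b 0, b 1⁆ = b 1 ∧ ⁅b 0, b 2⁆ = -b 2 ∧ ⁅b 1, b 2⁆ = 0) := by
  classical
  set D : LieIdeal ℂ L := LieAlgebra.derivedSeries ℂ L 1 with hDdef
  have hD1 : D = ⁅(⊤ : LieIdeal ℂ L), (⊤ : LieIdeal ℂ L)⁆ := by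
    rw [hDdef, LieAlgebra.derivedSeries_def, LieAlgebra.derivedSeriesOfIdeal_succ,
      LieAlgebra.derivedSeriesOfIdeal_zero]
  set p : Submodule ℂ L := LieSubmodule.toSubmodule D with hpdef
  have hmemD : ∀ x y : L, ⁅x, y⁆ ∈ p := by
    intro x y
    have h1 : ⁅x, y⁆ ∈ ⁅(⊤ : LieIdeal ℂ L), (⊤ : LieIdeal ℂ L)⁆ :=
      LieSubmodule.lie_mem_lie (LieSubmodule.mem_top x) (LieSubmodule.mem_top y)
    rw [hpdef, hD1]
    exact h1
  have hspan : p =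
      Submodule.span ℂ {m : L | ∃ x' ∈ (⊤ : LieIdeal ℂ L), ∃ n ∈ (⊤ : LieIdeal ℂ L), ⁅x', n⁆ = m} := by
    have h1 := LieSubmodule.lieIdeal_oper_eq_linear_span'
      (R := ℂ) (L := L) (M := L) (N := (⊤ : LieIdeal ℂ L)) (I := (⊤ : LieIdeal ℂ L))
    rw [hpdef, hD1]
    exact h1
  have hDne : D ≠ ⊤ := by
    intro h
    obtain ⟨k, hk⟩ := (LieAlgebra.isSolvable_iff (R := ℂ) (L := L)).mp hsolv
    have h2 : LieAlgebra.derivedSeries ℂ L k = ⊤ := by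
      apply LieIdeal.derivedSeries_eq_top
      rw [← hDdef]; exact h
    have hx0 : ∀ x : L, x = 0 := by
      intro x
      have hx1 : x ∈ LieAlgebra.derivedSeries ℂ L k := by
        rw [h2]; exact LieSubmodule.mem_top x
      rw [hk] at hx1
      simpa using hx1
    haveI hss : Subsingleton L := ⟨fun a b => by rw [hx0 a, hx0 b]⟩
    have h4 : Module.finrank ℂ L = 0 := Module.finrank_zero_of_subsingleton
    omega
  have hpne : p ≠ ⊤ := by
    intro h
    apply hDne
    rw [← LieSubmodule.toSubmodule_inj, ← hpdef, h, LieSubmodule.top_toSubmodule]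
  have hdlt : finrank ℂ p < 3 := by
    have := Submodule.finrank_lt (K := ℂ) (V := L) hpne
    omega
  obtain hd | hd | hd : finrank ℂ p = 0 ∨ finrank ℂ p = 1 ∨ finrank ℂ p = 2 := by omega
  · -- abelian case
    have h0 : p = ⊥ := Submodule.finrank_eq_zero.mp hd
    have hab : ∀ x y : L, ⁅x, y⁆ = 0 := by
      intro x y
      have := hmemD x y
      rw [h0, Submodule.mem_bot] at this
      exact this
    exact ⟨Module.finBasisOfFinrankEq ℂ L hdim, Or.inl ⟨hab _ _, hab _ _, hab _ _⟩⟩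
  · -- Heisenberg case
    obtain ⟨e1, e2, hz⟩ : ∃ e1 e2 : L, ⁅e1, e2⁆ ≠ 0 := by
      by_contra hcon
      push_neg at hcon
      have hle : p ≤ ⊥ := by
        rw [hspan, Submodule.span_le]
        rintro m ⟨q, -, r, -, rfl⟩
        simp [hcon q r]
      have hb : p = ⊥ := le_bot_iff.mp hle
      rw [hb, finrank_bot] at hd
      omega
    set z := ⁅e1, e2⁆ with hzdef
    have hzD : z ∈ p := hmemD e1 e2
    -- centrality of everything in D
    have hcent : ∀ x : L, ∀ v ∈ p, ⁅x, v⁆ = 0 := by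
      intro x
      have h' : ∀ y ∈ p, (LieAlgebra.ad ℂ L x) y ∈ p := fun y _ => hmemD x y
      set A := (LieAlgebra.ad ℂ L x).restrict h' with hAdef
      have htr : LinearMap.trace ℂ _ A = 0 := by
        rw [← my_trace_restrict _ _ (fun y => hmemD x y) h']
        exact hunimod x
      let bD : Basis (Fin 1) ℂ p := Module.basisUnique (Fin 1) hd
      have hsum : LinearMap.trace ℂ _ A = bD.repr (A (bD 0)) 0 := by
        rw [my_trace_eq_sum_repr bD A, Fin.sum_univ_one]
      have hA0 : A (bD 0) = 0 := by
        have hv := Basis.sum_repr bD (A (bD 0))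
        rw [Fin.sum_univ_one] at hv
        rw [← hv, hsum.symm.trans htr, zero_smul]
      have hb0 : ⁅x, ((bD 0 : p) : L)⁆ = 0 := by
        have := congrArg Subtype.val hA0
        simpa [hAdef, LinearMap.restrict_apply, LieAlgebra.ad_apply] using this
      intro v hv
      have hv2 := Basis.sum_repr bD ⟨v, hv⟩
      rw [Fin.sum_univ_one] at hv2
      have hvL : v = bD.repr ⟨v, hv⟩ 0 • ((bD 0 : p) : L) :=
        (congrArg Subtype.val hv2).symm
      rw [hvL, lie_smul, hb0, smul_zero]
    have hli : LinearIndependent ℂ ![e1, e2, z] := by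
      rw [Fintype.linearIndependent_iff]
      intro g hg
      rw [Fin.sum_univ_three] at hg
      simp only [Matrix.cons_val_zero, Matrix.cons_val_one, Matrix.head_cons,
        Matrix.cons_val_two, Matrix.tail_cons] at hg
      have h1 : g 1 = 0 := by
        have hb := congrArg (fun w => ⁅e1, w⁆) hg
        simp only [lie_add, lie_smul, lie_self, smul_zero, lie_zero, zero_add,
          hcent e1 z hzD, add_zero, ← hzdef] at hb
        exact (smul_eq_zero.mp hb).resolve_right hz
      have h0 : g 0 = 0 := by
        have hb := congrArg (fun w => ⁅e2, w⁆) hg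
        simp only [lie_add, lie_smul, lie_self, smul_zero, lie_zero, zero_add, add_zero,
          hcent e2 z hzD] at hb
        have h21 : ⁅e2, e1⁆ = -z := by rw [hzdef, ← lie_skew]
        rw [h21, smul_neg, neg_eq_zero] at hb
        exact (smul_eq_zero.mp hb).resolve_right hz
      have h2 : g 2 = 0 := by
        rw [h0, h1, zero_smul, zero_smul, zero_add, zero_add] at hg
        exact (smul_eq_zero.mp hg).resolve_right hz
      intro i
      fin_cases i <;> assumption
    have hcard : Fintype.card (Fin 3) = finrank ℂ L := by simp [hdim]
    refine ⟨basisOfLinearIndependentOfCardEqFinrank hli hcard, Or.inr (Or.inl ?_)⟩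
    have hb : ⇑(basisOfLinearIndependentOfCardEqFinrank hli hcard) = ![e1, e2, z] :=
      coe_basisOfLinearIndependentOfCardEqFinrank hli hcard
    rw [hb]
    refine ⟨rfl, ?_, ?_⟩
    · exact hcent e1 z hzD
    · exact hcent e2 z hzD
  · -- sol case
    obtain ⟨x, hx⟩ : ∃ x : L, x ∉ p := by
      by_contra hcon
      push_neg at hcon
      exact hpne (Submodule.eq_top_iff'.mpr hcon)
    have hsup : p ⊔ Submodule.span ℂ {x} = ⊤ := by
      have hlt : p < p ⊔ Submodule.span ℂ {x} := by
        refine lt_of_le_of_ne le_sup_left (fun h => hx ?_)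
        rw [h]
        exact Submodule.mem_sup_right (Submodule.mem_span_singleton_self x)
      have h1 := Submodule.finrank_lt_finrank_of_lt hlt
      have h2 := Submodule.finrank_le (p ⊔ Submodule.span ℂ {x})
      apply Submodule.eq_top_of_finrank_eq
      rw [hdim]
      omega
    have hdecomp : ∀ y : L, ∃ (s : ℂ) (u : L), u ∈ p ∧ y = s • x + u := by
      intro y
      have hy : y ∈ p ⊔ Submodule.span ℂ {x} := by rw [hsup]; trivial
      obtain ⟨u, hu, v, hv, huv⟩ := Submodule.mem_sup.mp hy
      obtain ⟨s, rfl⟩ := Submodule.mem_span_singleton.mp hv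
      exact ⟨s, u, hu, by rw [← huv, add_comm]⟩
    have hcard2 : Fintype.card (Fin 2) = finrank ℂ p := by simp [hd]
    by_cases habD : ∀ u ∈ p, ∀ v ∈ p, ⁅u, v⁆ = (0 : L)
    · -- D abelian: sol
      have h' : ∀ y ∈ p, (LieAlgebra.ad ℂ L x) y ∈ p := fun y _ => hmemD x y
      set A := (LieAlgebra.ad ℂ L x).restrict h' with hAdef
      have htrA : LinearMap.trace ℂ _ A = 0 := by
        rw [← my_trace_restrict _ _ (fun y => hmemD x y) h']
        exact hunimod x
      have hAsurj : Function.Surjective A := by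
        have hle : p ≤ Submodule.map (LieAlgebra.ad ℂ L x) p := by
          conv_lhs => rw [hspan]
          rw [Submodule.span_le]
          rintro m ⟨q, -, r, -, rfl⟩
          obtain ⟨s, u, hu, rfl⟩ := hdecomp q
          obtain ⟨t, v, hv, rfl⟩ := hdecomp r
          have hbr : ⁅s • x + u, t • x + v⁆ = (LieAlgebra.ad ℂ L x) (s • v - t • u) := by
            rw [LieAlgebra.ad_apply, lie_sub, lie_smul, lie_smul]
            rw [add_lie, lie_add, lie_add, smul_lie, smul_lie, lie_smul, lie_smul,
              lie_self, smul_zero, smul_zero, habD u hu v hv, add_zero]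
            rw [show ⁅u, x⁆ = -⁅x, u⁆ by rw [← lie_skew]]
            rw [smul_neg]
            abel
          rw [hbr]
          exact Submodule.mem_map_of_mem
            (Submodule.sub_mem _ (Submodule.smul_mem _ _ hv) (Submodule.smul_mem _ _ hu))
        rintro ⟨d, hdm⟩
        obtain ⟨v, hvD, hva⟩ := hle hdm
        refine ⟨⟨v, hvD⟩, ?_⟩
        apply Subtype.ext
        simpa [hAdef, LinearMap.restrict_apply] using hva
      have hAinj : Function.Injective A := by
        rw [← LinearMap.injective_iff_surjective] at hAsurj
        exact hAsurj
      have hnt : Nontrivial p := nontrivial_of_finrank_pos (R := ℂ) (by rw [hd]; norm_num)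
      obtain ⟨μ, hμ⟩ := Module.End.exists_eigenvalue A
      obtain ⟨w, hwe⟩ := hμ.exists_hasEigenvector
      have hAw : A w = μ • w := hwe.apply_eq_smul
      have hwne : w ≠ 0 := hwe.right
      have hμne : μ ≠ 0 := by
        intro h0
        apply hwne
        apply hAinj
        rw [hAw, h0, zero_smul, map_zero]
      obtain ⟨u', hu'⟩ : ∃ u' : p, u' ∉ Submodule.span ℂ {w} := by
        by_contra hcu
        push_neg at hcu
        have htop : Submodule.span ℂ {w} = ⊤ := Submodule.eq_top_iff'.mpr hcu
        have h1 : finrank ℂ (Submodule.span ℂ {w}) = 1 := finrank_span_singleton hwne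
        rw [htop, finrank_top] at h1
        omega
      have hpair : LinearIndependent ℂ ![u', w] := by
        rw [linearIndependent_fin2]
        refine ⟨hwne, fun t ht => hu' ?_⟩
        simp only [Matrix.cons_val_one, Matrix.head_cons, Matrix.cons_val_zero] at ht
        rw [← ht]
        exact Submodule.smul_mem _ _ (Submodule.mem_span_singleton_self w)
      set bF := basisOfLinearIndependentOfCardEqFinrank hpair hcard2 with hbFdef
      have hbF : ⇑bF = ![u', w] := coe_basisOfLinearIndependentOfCardEqFinrank hpair hcard2
      have hb0 : bF 0 = u' := by rw [hbF]; rfl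
      have hb1 : bF 1 = w := by rw [hbF]; rfl
      set α := bF.repr (A u') 0 with hαdef
      set β := bF.repr (A u') 1 with hβdef
      have hrepr : A u' = α • u' + β • w := by
        have h5 := Basis.sum_repr bF (A u')
        rw [Fin.sum_univ_two, hb0, hb1] at h5
        exact h5.symm
      have htr2 : α + μ = 0 := by
        have h6 := htrA
        rw [my_trace_eq_sum_repr bF, Fin.sum_univ_two, hb0, hb1, hAw] at h6
        rw [map_smul, Finsupp.smul_apply] at h6
        rw [← hb1, Basis.repr_self] at h6
        simpa [hαdef] using h6
      have hαval : α = -μ := eq_neg_of_add_eq_zero_left htr2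
      set cc := -β / (2 * μ) with hccdef
      set u'' := u' + cc • w with hu''def
      have hAu'' : A u'' = -μ • u'' := by
        rw [hu''def, map_add, map_smul, hrepr, hAw, hαval]
        match_scalars
        · ring
        · rw [hccdef]
          field_simp
          ring
      have hu''ne : u'' ≠ 0 := by
        intro h0
        have h7 : (-cc) • w = u' := by
          rw [neg_smul]
          rw [hu''def] at h0
          exact neg_eq_of_add_eq_zero_left h0
        exact ((linearIndependent_fin2.mp hpair).2 (-cc)) (by
          simpa using h7)
      set e1 : L := μ⁻¹ • x with he1def
      have hbr1 : ⁅e1, (w : L)⁆ = (w : L) := by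
        have h6 : ⁅x, (w : L)⁆ = μ • (w : L) := by
          have := congrArg Subtype.val hAw
          simpa [hAdef, LinearMap.restrict_apply, LieAlgebra.ad_apply] using this
        rw [he1def, smul_lie, h6, smul_smul, inv_mul_cancel₀ hμne, one_smul]
      have hbr2 : ⁅e1, (u'' : L)⁆ = -(u'' : L) := by
        have h7 : ⁅x, (u'' : L)⁆ = -μ • (u'' : L) := by
          have := congrArg Subtype.val hAu''
          simpa [hAdef, LinearMap.restrict_apply, LieAlgebra.ad_apply] using this
        rw [he1def, smul_lie, h7, smul_smul]
        rw [show μ⁻¹ * -μ = -1 by field_simp]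
        rw [neg_one_smul]
      have hbr3 : ⁅(w : L), (u'' : L)⁆ = 0 := habD _ w.2 _ u''.2
      have hli3 : LinearIndependent ℂ ![e1, (w : L), (u'' : L)] := by
        rw [Fintype.linearIndependent_iff]
        intro g hg
        rw [Fin.sum_univ_three] at hg
        simp only [Matrix.cons_val_zero, Matrix.cons_val_one, Matrix.head_cons,
          Matrix.cons_val_two, Matrix.tail_cons] at hg
        have hg0 : g 0 = 0 := by
          by_contra hg0
          apply hx
          have hmem : g 0 • e1 = -(g 1 • (w : L) + g 2 • (u'' : L)) := by
            rw [add_assoc] at hg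
            exact eq_neg_of_add_eq_zero_left hg
          have hmemp : g 0 • e1 ∈ p := by
            rw [hmem]
            exact Submodule.neg_mem _ (Submodule.add_mem _
              (Submodule.smul_mem _ _ w.2) (Submodule.smul_mem _ _ u''.2))
          have hxe : x = (g 0 * μ⁻¹)⁻¹ • (g 0 • e1) := by
            rw [he1def, smul_smul, smul_smul]
            rw [show (g 0 * μ⁻¹)⁻¹ * g 0 * μ⁻¹ = 1 by field_simp, one_smul]
          rw [hxe]
          exact Submodule.smul_mem _ _ hmemp
        rw [hg0, zero_smul, zero_add] at hg
        have hgD : g 1 • w + g 2 • u'' = 0 := by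
          apply Subtype.ext
          simpa using hg
        have hsub : g 2 • u' + (g 1 + g 2 * cc) • w = 0 := by
          rw [hu''def] at hgD
          calc g 2 • u' + (g 1 + g 2 * cc) • w
              = g 1 • w + g 2 • (u' + cc • w) := by module
            _ = 0 := hgD
        have hz2 := Fintype.linearIndependent_iff.mp hpair ![g 2, g 1 + g 2 * cc] (by
          rw [Fin.sum_univ_two]
          simpa using hsub)
        have hg2 : g 2 = 0 := hz2 0
        have hg12 : g 1 + g 2 * cc = 0 := hz2 1
        intro i
        fin_cases i
        · exact hg0
        · simpa [hg2] using hg12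
        · exact hg2
      have hcard3 : Fintype.card (Fin 3) = finrank ℂ L := by simp [hdim]
      refine ⟨basisOfLinearIndependentOfCardEqFinrank hli3 hcard3, Or.inr (Or.inr ?_)⟩
      have hb : ⇑(basisOfLinearIndependentOfCardEqFinrank hli3 hcard3) = ![e1, (w : L), (u'' : L)] :=
        coe_basisOfLinearIndependentOfCardEqFinrank hli3 hcard3
      rw [hb]
      exact ⟨hbr1, hbr2, hbr3⟩
    · -- D nonabelian: contradiction with unimodularity
      exfalso
      push_neg at habD
      obtain ⟨a, ha, c, hc, hwne⟩ := habD
      set w := ⁅a, c⁆ with hwdef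
      have hwD : w ∈ p := hmemD a c
      have hac : LinearIndependent ℂ ![(⟨a, ha⟩ : p), ⟨c, hc⟩] := by
        rw [linearIndependent_fin2]
        constructor
        · intro h0
          apply hwne
          have hc0 : c = 0 := congrArg Subtype.val h0
          rw [hwdef, hc0, lie_zero]
        · intro t ht
          apply hwne
          have hat : a = t • c := (congrArg Subtype.val ht).symm
          rw [hwdef, hat, smul_lie, lie_self, smul_zero]
      let bD := basisOfLinearIndependentOfCardEqFinrank hac hcard2
      have hbD : ⇑bD = ![⟨a, ha⟩, ⟨c, hc⟩] :=
        coe_basisOfLinearIndependentOfCardEqFinrank hac hcard2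
      set α := bD.repr ⟨w, hwD⟩ 0 with hαdef
      set β := bD.repr ⟨w, hwD⟩ 1 with hβdef
      have hwrep : w = α • a + β • c := by
        have h5 := Basis.sum_repr bD ⟨w, hwD⟩
        rw [Fin.sum_univ_two] at h5
        have hb0 : bD 0 = ⟨a, ha⟩ := by rw [hbD]; rfl
        have hb1 : bD 1 = ⟨c, hc⟩ := by rw [hbD]; rfl
        rw [hb0, hb1, ← hαdef, ← hβdef] at h5
        exact (congrArg Subtype.val h5).symm
      have haw : ⁅a, w⁆ = β • w := by
        conv_lhs => rw [hwrep]
        rw [lie_add, lie_smul, lie_smul, lie_self, smul_zero, zero_add, ← hwdef]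
      have hcw : ⁅c, w⁆ = -(α • w) := by
        conv_lhs => rw [hwrep]
        rw [lie_add, lie_smul, lie_smul, lie_self, smul_zero, add_zero]
        rw [show ⁅c, a⁆ = -w by rw [hwdef, ← lie_skew], smul_neg]
      obtain ⟨u₀, hu₀D, hu₀⟩ : ∃ u₀, u₀ ∈ p ∧ ⁅u₀, w⁆ = w := by
        by_cases hβ : β = 0
        · have hα : α ≠ 0 := by
            intro h0
            apply hwne
            rw [hwdef]
            rw [hwdef] at hwrep
            rw [hwrep, h0, hβ, zero_smul, zero_smul, add_zero]
          refine ⟨(-α⁻¹) • c, Submodule.smul_mem _ _ hc, ?_⟩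
          rw [smul_lie, hcw, smul_neg, neg_smul, neg_neg, smul_smul, inv_mul_cancel₀ hα, one_smul]
        · refine ⟨β⁻¹ • a, Submodule.smul_mem _ _ ha, ?_⟩
          rw [smul_lie, haw, smul_smul, inv_mul_cancel₀ hβ, one_smul]
      have hwne' : w ≠ 0 := hwne
      have hli2 : LinearIndependent ℂ ![(⟨u₀, hu₀D⟩ : p), ⟨w, hwD⟩] := by
        rw [linearIndependent_fin2]
        constructor
        · intro h0
          exact hwne' (congrArg Subtype.val h0)
        · intro t ht
          apply hwne'
          have hut : u₀ = t • w := (congrArg Subtype.val ht).symm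
          calc w = ⁅u₀, w⁆ := hu₀.symm
            _ = ⁅t • w, w⁆ := by rw [← hut]
            _ = 0 := by rw [smul_lie, lie_self, smul_zero]
      set bE := basisOfLinearIndependentOfCardEqFinrank hli2 hcard2 with hbEdef
      have hbE : ⇑bE = ![⟨u₀, hu₀D⟩, ⟨w, hwD⟩] :=
        coe_basisOfLinearIndependentOfCardEqFinrank hli2 hcard2
      have h' : ∀ y ∈ p, (LieAlgebra.ad ℂ L u₀) y ∈ p := fun y _ => hmemD u₀ y
      have htr := hunimod u₀
      rw [my_trace_restrict _ _ (fun y => hmemD u₀ y) h', my_trace_eq_sum_repr bE,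
        Fin.sum_univ_two] at htr
      have hb0 : bE 0 = ⟨u₀, hu₀D⟩ := by rw [hbE]; rfl
      have hb1 : bE 1 = ⟨w, hwD⟩ := by rw [hbE]; rfl
      have e0 : (LieAlgebra.ad ℂ L u₀).restrict h' (bE 0) = 0 := by
        apply Subtype.ext
        rw [hb0]
        simp [LinearMap.restrict_apply, LieAlgebra.ad_apply]
      have e1' : (LieAlgebra.ad ℂ L u₀).restrict h' (bE 1) = bE 1 := by
        apply Subtype.ext
        rw [hb1]
        simp only [LinearMap.restrict_apply, LieAlgebra.ad_apply]
        exact hu₀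
      rw [e0, e1'] at htr
      simp [Basis.repr_self] at htr
end
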